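/- Let M < r₀ < r₁ and ψ : [M, r₁] → ℝ be continuously differentiable. Then there exists a constant C > 0 depending only on M, r₀, r₁ such that ∫_M^{r₀} ψ(ρ)² dρ ≤ C ∫_{r₀}^{r₁} ψ(ρ)² dρ + C ∫_M^{r₁} (ρ − M)² (ψ'(ρ))² dρ. -/

import Mathlib

open intervalIntegral MeasureTheory Set

set_option maxHeartbeats 1000000 in
/-- Third Hardy inequality (1-dimensional version). -/
theorem third_hardy_one_dim (M r₀ r₁ : ℝ) (h0 : M < r₀) (h1 : r₀ < r₁) :
    ∃ C > (0:ℝ), ∀ ψ : ℝ → ℝ, ContDiffOn ℝ 1 ψ (Set.Icc M r₁) →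
      (∫ ρ in M..r₀, ψ ρ ^ 2) ≤
        C * (∫ ρ in r₀..r₁, ψ ρ ^ 2) + C * ∫ ρ in M..r₁, (ρ - M) ^ 2 * deriv ψ ρ ^ 2 := by
  have hM1 : M < r₁ := h0.trans h1
  have h01 : (0:ℝ) < r₁ - r₀ := by linarith
  have h0M : (0:ℝ) < r₀ - M := by linarith
  set K : ℝ := (r₁ - r₀) / (r₀ - M) with hKdef
  set a : ℝ := (r₀ - M) / (r₁ - r₀) with hadef
  have hKnn : 0 ≤ K := div_nonneg h01.le h0M.le
  have ha : 0 ≤ a := div_nonneg h0M.le h01.le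
  refine ⟨4*a + 2*a*K^2 + 5, by nlinarith [mul_nonneg ha (sq_nonneg K)], ?_⟩
  intro ψ hψ
  set g : ℝ → ℝ := derivWithin ψ (Icc M r₁) with hgdef
  have hψc : ContinuousOn ψ (Icc M r₁) := hψ.continuousOn
  have hgc : ContinuousOn g (Icc M r₁) :=
    hψ.continuousOn_derivWithin (uniqueDiffOn_Icc hM1) le_rfl
  have hd : ∀ x ∈ Ioo M r₁, HasDerivAt ψ (g x) x := by
    intro x hx
    have hmem : Icc M r₁ ∈ nhds x := Icc_mem_nhds hx.1 hx.2
    exact ((hψ.differentiableOn one_ne_zero x (Ioo_subset_Icc_self hx)).hasDerivWithinAt).hasDerivAt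
      hmem
  have hgd : ∀ x ∈ Ioo M r₁, g x = deriv ψ x := fun x hx => ((hd x hx).deriv).symm
  -- continuity of the various integrands
  have cψ2 : ContinuousOn (fun ρ => ψ ρ ^ 2) (Icc M r₁) := hψc.pow 2
  have cA : ContinuousOn (fun ρ => (ρ - M) * (2 * ψ ρ * g ρ)) (Icc M r₁) :=
    (continuousOn_id.sub continuousOn_const).mul ((continuousOn_const.mul hψc).mul hgc)
  have cB : ContinuousOn (fun ρ => (r₁ - ρ) * (2 * ψ ρ * g ρ)) (Icc M r₁) :=
    (continuousOn_const.sub continuousOn_id).mul ((continuousOn_const.mul hψc).mul hgc)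
  have cw : ContinuousOn (fun ρ => (ρ - M) ^ 2 * g ρ ^ 2) (Icc M r₁) :=
    ((continuousOn_id.sub continuousOn_const).pow 2).mul (hgc.pow 2)
  have hci : ∀ {b c : ℝ} {f : ℝ → ℝ}, M ≤ b → b ≤ c → c ≤ r₁ →
      ContinuousOn f (Icc M r₁) → IntervalIntegrable f volume b c := by
    intro b c f hb hbc hc hf
    exact (hf.mono (by rw [uIcc_of_le hbc]; exact Icc_subset_Icc hb hc)).intervalIntegrable
  have iψ0 : IntervalIntegrable (fun ρ => ψ ρ ^ 2) volume M r₀ := hci le_rfl h0.le h1.le cψ2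
  have iψ1 : IntervalIntegrable (fun ρ => ψ ρ ^ 2) volume r₀ r₁ := hci h0.le h1.le le_rfl cψ2
  have iA0 : IntervalIntegrable (fun ρ => (ρ - M) * (2 * ψ ρ * g ρ)) volume M r₀ :=
    hci le_rfl h0.le h1.le cA
  have iB1 : IntervalIntegrable (fun ρ => (r₁ - ρ) * (2 * ψ ρ * g ρ)) volume r₀ r₁ :=
    hci h0.le h1.le le_rfl cB
  have iψ1n : IntervalIntegrable (fun ρ => -(ψ ρ ^ 2)) volume r₀ r₁ :=
    hci h0.le h1.le le_rfl cψ2.neg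
  have iA0n : IntervalIntegrable (fun ρ => -((ρ - M) * (2 * ψ ρ * g ρ))) volume M r₀ :=
    hci le_rfl h0.le h1.le cA.neg
  have iB1n : IntervalIntegrable (fun ρ => -((r₁ - ρ) * (2 * ψ ρ * g ρ))) volume r₀ r₁ :=
    hci h0.le h1.le le_rfl cB.neg
  have iw0 : IntervalIntegrable (fun ρ => (ρ - M) ^ 2 * g ρ ^ 2) volume M r₀ :=
    hci le_rfl h0.le h1.le cw
  have iw1 : IntervalIntegrable (fun ρ => (ρ - M) ^ 2 * g ρ ^ 2) volume r₀ r₁ :=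
    hci h0.le h1.le le_rfl cw
  -- FTC identities
  have ftcA : (∫ ρ in M..r₀, (ψ ρ ^ 2 + (ρ - M) * (2 * ψ ρ * g ρ)))
      = (r₀ - M) * ψ r₀ ^ 2 := by
    have h := integral_eq_sub_of_hasDerivAt_of_le (f := fun ρ => (ρ - M) * ψ ρ ^ 2)
      (f' := fun ρ => ψ ρ ^ 2 + (ρ - M) * (2 * ψ ρ * g ρ)) h0.le
      (((continuousOn_id.sub continuousOn_const).mul
        (cψ2.mono (Icc_subset_Icc le_rfl h1.le))).congr fun x _ => rfl)
      ?_ (iψ0.add iA0)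
    · simpa using h
    · intro x hx
      have hx' : x ∈ Ioo M r₁ := ⟨hx.1, hx.2.trans h1⟩
      have h2 := ((hasDerivAt_id x).sub_const M).mul ((hd x hx').pow 2)
      refine h2.congr_deriv ?_
      push_cast
      simp only [id_eq, Pi.pow_apply, Pi.sub_apply]
      ring
  have ftcB : (∫ ρ in r₀..r₁, (-(ψ ρ ^ 2) + (r₁ - ρ) * (2 * ψ ρ * g ρ)))
      = -((r₁ - r₀) * ψ r₀ ^ 2) := by
    have h := integral_eq_sub_of_hasDerivAt_of_le (f := fun ρ => (r₁ - ρ) * ψ ρ ^ 2)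
      (f' := fun ρ => -(ψ ρ ^ 2) + (r₁ - ρ) * (2 * ψ ρ * g ρ)) h1.le
      (((continuousOn_const.sub continuousOn_id).mul
        (cψ2.mono (Icc_subset_Icc h0.le le_rfl))).congr fun x _ => rfl)
      ?_ (iψ1n.add iB1)
    · simpa using h
    · intro x hx
      have hx' : x ∈ Ioo M r₁ := ⟨h0.trans hx.1, hx.2⟩
      have h2 := ((hasDerivAt_const x r₁).sub (hasDerivAt_id x)).mul ((hd x hx').pow 2)
      refine h2.congr_deriv ?_
      push_cast
      simp only [id_eq, Pi.pow_apply, Pi.sub_apply]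
      ring
  -- split the FTC identities
  rw [intervalIntegral.integral_add iψ0 iA0] at ftcA
  rw [intervalIntegral.integral_add iψ1n iB1, intervalIntegral.integral_neg] at ftcB
  -- bound on the cross term over [M, r₀]
  have hXneg : (∫ ρ in M..r₀, -((ρ - M) * (2 * ψ ρ * g ρ)))
      ≤ ∫ ρ in M..r₀, ((1/2) * ψ ρ ^ 2 + 2 * ((ρ - M) ^ 2 * g ρ ^ 2)) := by
    apply intervalIntegral.integral_mono_on h0.le iA0n ((iψ0.const_mul _).add (iw0.const_mul _))
    intro x _
    nlinarith [sq_nonneg (ψ x + 2 * (x - M) * g x)]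
  rw [intervalIntegral.integral_neg, integral_add (iψ0.const_mul _) (iw0.const_mul _), intervalIntegral.integral_const_mul,
    intervalIntegral.integral_const_mul] at hXneg
  -- bound on the cross term over [r₀, r₁]
  have hYneg : (∫ ρ in r₀..r₁, -((r₁ - ρ) * (2 * ψ ρ * g ρ)))
      ≤ ∫ ρ in r₀..r₁, (ψ ρ ^ 2 + K^2 * ((ρ - M) ^ 2 * g ρ ^ 2)) := by
    apply intervalIntegral.integral_mono_on h1.le iB1n (iψ1.add (iw1.const_mul _))
    intro x hx
    have hK0 : K * (r₀ - M) = r₁ - r₀ := by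
      rw [hKdef]; field_simp
    have hbx : r₁ - x ≤ K * (x - M) := by
      have h3 : K * (r₀ - M) ≤ K * (x - M) :=
        mul_le_mul_of_nonneg_left (by linarith [hx.1]) hKnn
      linarith [hx.1]
    have e1 : (r₁ - x) * (r₁ - x) ≤ (K * (x - M)) * (K * (x - M)) :=
      mul_self_le_mul_self (by linarith [hx.2]) hbx
    nlinarith [sq_nonneg (ψ x + (r₁ - x) * g x),
      mul_le_mul_of_nonneg_right e1 (sq_nonneg (g x))]
  rw [intervalIntegral.integral_neg, intervalIntegral.integral_add iψ1 (iw1.const_mul _), intervalIntegral.integral_const_mul] at hYneg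
  -- nonnegativity
  have hI₁nn : 0 ≤ ∫ ρ in r₀..r₁, ψ ρ ^ 2 :=
    intervalIntegral.integral_nonneg h1.le (fun x _ => sq_nonneg _)
  have hJ₀nn : 0 ≤ ∫ ρ in M..r₀, (ρ - M) ^ 2 * g ρ ^ 2 :=
    intervalIntegral.integral_nonneg h0.le (fun x _ => mul_nonneg (sq_nonneg _) (sq_nonneg _))
  have hJ₁nn : 0 ≤ ∫ ρ in r₀..r₁, (ρ - M) ^ 2 * g ρ ^ 2 :=
    intervalIntegral.integral_nonneg h1.le (fun x _ => mul_nonneg (sq_nonneg _) (sq_nonneg _))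
  -- key estimates
  have keyA : (∫ ρ in M..r₀, ψ ρ ^ 2)
      ≤ 2 * ((r₀ - M) * ψ r₀ ^ 2) + 4 * ∫ ρ in M..r₀, (ρ - M) ^ 2 * g ρ ^ 2 := by
    linarith [ftcA, hXneg]
  have keyB : (r₁ - r₀) * ψ r₀ ^ 2
      ≤ 2 * (∫ ρ in r₀..r₁, ψ ρ ^ 2) + K^2 * ∫ ρ in r₀..r₁, (ρ - M) ^ 2 * g ρ ^ 2 := by
    linarith [ftcB, hYneg]
  have f2 : (r₀ - M) * ψ r₀ ^ 2
      ≤ a * (2 * (∫ ρ in r₀..r₁, ψ ρ ^ 2) + K^2 * ∫ ρ in r₀..r₁, (ρ - M) ^ 2 * g ρ ^ 2) :=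
    calc (r₀ - M) * ψ r₀ ^ 2 = a * ((r₁ - r₀) * ψ r₀ ^ 2) := by
          rw [hadef]; field_simp
      _ ≤ _ := mul_le_mul_of_nonneg_left keyB ha
  -- replace deriv by derivWithin in the goal
  have hJeq : (∫ ρ in M..r₁, (ρ - M) ^ 2 * deriv ψ ρ ^ 2)
      = ∫ ρ in M..r₁, (ρ - M) ^ 2 * g ρ ^ 2 := by
    apply intervalIntegral.integral_congr_ae
    have hne : ∀ᵐ (x : ℝ), x ≠ r₁ := by
      rw [ae_iff]
      simp only [not_not]
      convert Real.volume_singleton (a := r₁) using 2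
      rfl
    filter_upwards [hne] with x hx hxmem
    rw [uIoc_of_le hM1.le] at hxmem
    rw [← hgd x ⟨hxmem.1, lt_of_le_of_ne hxmem.2 hx⟩]
  have hJsplit : (∫ ρ in M..r₀, (ρ - M) ^ 2 * g ρ ^ 2)
      + (∫ ρ in r₀..r₁, (ρ - M) ^ 2 * g ρ ^ 2) = ∫ ρ in M..r₁, (ρ - M) ^ 2 * g ρ ^ 2 :=
    integral_add_adjacent_intervals iw0 iw1
  rw [hJeq, ← hJsplit]
  have haK2 : 0 ≤ a * K^2 := mul_nonneg ha (sq_nonneg K)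
  nlinarith [keyA, f2, mul_nonneg haK2 hI₁nn, mul_nonneg haK2 hJ₀nn, mul_nonneg haK2 hJ₁nn,
    mul_nonneg ha hI₁nn, mul_nonneg ha hJ₀nn, mul_nonneg ha hJ₁nn]
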